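/- arXiv:1902.08168 — 2 statements merged into one kernel-verified Lean document; each statement's English description precedes it below -/
import Mathlib

section
/- Let ρ ∈ C²([0,T]; ℝ^{n×m}) with ρ(0) = 0, let Σ ∈ ℝ^{m×m} be symmetric, and let g ∈ C¹([0,T]; ℝ^{n×m}) satisfy g(0) = 0 and g'(t)(Σ − ∫₀ᵗ ρ'(u)ᵀ ρ'(u) du) = ρ'(t) for all t ∈ [0,T]. Define p(s) = ρ''(s)ᵀ, q(s) = −g(s)ρ''(s)ᵀ − g'(s)ρ'(s)ᵀ, and λ(t,s) = g(t)p(s) + q(s) ∈ ℝ^{n×n}. Then for every t ∈ [0,T] one has ρ(t) − ∫₀ᵗ λ(t,u)ρ(u) du − g(t)Σ = 0. -/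
open MeasureTheory Matrix Set

noncomputable section

lemma zero_of_deriv_zero {T : ℝ} (hT : 0 < T) (f : ℝ → ℝ)
    (hd : ∀ x ∈ Icc (0:ℝ) T, HasDerivWithinAt f 0 (Icc 0 T) x)
    (h0 : f 0 = 0) : ∀ x ∈ Icc (0:ℝ) T, f x = 0 := by
  intro x hx
  have h := constant_of_derivWithin_zero (f := f) (a := 0) (b := T)
    (fun y hy => (hd y hy).differentiableWithinAt)
    (fun y hy => HasDerivWithinAt.derivWithin (hd y (mem_Icc_of_Ico hy))
      (uniqueDiffOn_Icc hT y (mem_Icc_of_Ico hy)))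
  rw [h x hx, h0]

open intervalIntegral in
lemma ftc_within {T : ℝ} (h : ℝ → ℝ) (hc : ContinuousOn h (Icc 0 T)) :
    ∀ x ∈ Icc (0:ℝ) T,
      HasDerivWithinAt (fun s => ∫ u in (0:ℝ)..s, h u) (h x) (Icc 0 T) x := by
  intro x hx
  haveI : Fact (x ∈ Icc (0:ℝ) T) := ⟨hx⟩
  have hint : IntervalIntegrable h volume 0 x := by
    apply (hc.mono ?_).intervalIntegrable
    rw [uIcc_of_le hx.1]
    exact Icc_subset_Icc le_rfl hx.2
  exact integral_hasDerivWithinAt_right hint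
    (hc.stronglyMeasurableAtFilter_nhdsWithin measurableSet_Icc x)
    (hc x hx)

lemma contOn_mul_entry {a b c : ℕ} {s : Set ℝ} {M : ℝ → Matrix (Fin a) (Fin b) ℝ}
    {N : ℝ → Matrix (Fin b) (Fin c) ℝ}
    (hM : ∀ i j, ContinuousOn (fun u => M u i j) s)
    (hN : ∀ i j, ContinuousOn (fun u => N u i j) s) (i : Fin a) (j : Fin c) :
    ContinuousOn (fun u => (M u * N u) i j) s := by
  simp only [Matrix.mul_apply]
  exact continuousOn_finset_sum _ fun k _ => (hM i k).mul (hN k j)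

lemma hasDeriv_mul_entry {a b c : ℕ} {s : Set ℝ} {x : ℝ}
    {M Md : ℝ → Matrix (Fin a) (Fin b) ℝ} {N Nd : ℝ → Matrix (Fin b) (Fin c) ℝ}
    (hM : ∀ i j, HasDerivWithinAt (fun u => M u i j) (Md x i j) s x)
    (hN : ∀ i j, HasDerivWithinAt (fun u => N u i j) (Nd x i j) s x) (i : Fin a) (j : Fin c) :
    HasDerivWithinAt (fun u => (M u * N u) i j) ((Md x * N x + M x * Nd x) i j) s x := by
  simp only [Matrix.mul_apply, Matrix.add_apply]
  rw [← Finset.sum_add_distrib]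
  exact HasDerivWithinAt.fun_sum fun k _ => (hM i k).mul (hN k j)


/-- Entrywise interval integral of a matrix-valued function. -/
def matInt {a b : ℕ} (f : ℝ → Matrix (Fin a) (Fin b) ℝ) (s t : ℝ) :
    Matrix (Fin a) (Fin b) ℝ :=
  Matrix.of fun i j => ∫ u in s..t, f u i j

/-- Let `ρ ∈ C²([0,T]; ℝ^{n×m})` with `ρ(0) = 0`, `Σ ∈ ℝ^{m×m}` symmetric,
and `g ∈ C¹([0,T]; ℝ^{n×m})` with `g(0) = 0` and `g'(t)(Σ − ∫₀ᵗ ρ'(u)ᵀ ρ'(u) du) = ρ'(t)` on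
`[0,T]`.  With `p(s) = ρ''(s)ᵀ`, `q(s) = −g(s)ρ''(s)ᵀ − g'(s)ρ'(s)ᵀ`,
`λ(t,s) = g(t)p(s) + q(s)`, one has `ρ(t) − ∫₀ᵗ λ(t,u)ρ(u) du − g(t)Σ = 0` on `[0,T]`. -/
theorem stmt1 {m n : ℕ} (hm : 0 < m) (hn : 0 < n) (T : ℝ) (hT : 0 < T)
    (ρ ρ' ρ'' : ℝ → Matrix (Fin n) (Fin m) ℝ)
    (hρd : ∀ t ∈ Icc (0:ℝ) T, ∀ i j,
      HasDerivWithinAt (fun u => ρ u i j) (ρ' t i j) (Icc 0 T) t)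
    (hρd' : ∀ t ∈ Icc (0:ℝ) T, ∀ i j,
      HasDerivWithinAt (fun u => ρ' u i j) (ρ'' t i j) (Icc 0 T) t)
    (hρ''c : ∀ i j, ContinuousOn (fun t => ρ'' t i j) (Icc 0 T))
    (hρ0 : ρ 0 = 0)
    (Sig : Matrix (Fin m) (Fin m) ℝ) (hSig : Sig.IsSymm)
    (g g' : ℝ → Matrix (Fin n) (Fin m) ℝ)
    (hgd : ∀ t ∈ Icc (0:ℝ) T, ∀ i j,
      HasDerivWithinAt (fun u => g u i j) (g' t i j) (Icc 0 T) t)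
    (hg'c : ∀ i j, ContinuousOn (fun t => g' t i j) (Icc 0 T))
    (hg0 : g 0 = 0)
    (hgeq : ∀ t ∈ Icc (0:ℝ) T,
      g' t * (Sig - matInt (fun u => (ρ' u)ᵀ * ρ' u) 0 t) = ρ' t)
    (p : ℝ → Matrix (Fin m) (Fin n) ℝ) (hp : ∀ s, p s = (ρ'' s)ᵀ)
    (q : ℝ → Matrix (Fin n) (Fin n) ℝ)
    (hq : ∀ s, q s = -(g s * (ρ'' s)ᵀ) - g' s * (ρ' s)ᵀ)
    (lam : ℝ → ℝ → Matrix (Fin n) (Fin n) ℝ)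
    (hlam : ∀ t s, lam t s = g t * p s + q s) :
    ∀ t ∈ Icc (0:ℝ) T,
      ρ t - matInt (fun u => lam t u * ρ u) 0 t - g t * Sig = 0 := by
  have hcρ : ∀ i j, ContinuousOn (fun u => ρ u i j) (Icc 0 T) :=
    fun i j x hx => (hρd x hx i j).continuousWithinAt
  have hcρ' : ∀ i j, ContinuousOn (fun u => ρ' u i j) (Icc 0 T) :=
    fun i j x hx => (hρd' x hx i j).continuousWithinAt
  have hcg : ∀ i j, ContinuousOn (fun u => g u i j) (Icc 0 T) :=
    fun i j x hx => (hgd x hx i j).continuousWithinAt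
  have hcρ''T : ∀ (i : Fin m) (j : Fin n), ContinuousOn (fun u => (ρ'' u)ᵀ i j) (Icc 0 T) :=
    fun i j => by simpa using hρ''c j i
  have hcρ'T : ∀ (i : Fin m) (j : Fin n), ContinuousOn (fun u => (ρ' u)ᵀ i j) (Icc 0 T) :=
    fun i j => by simpa using hcρ' j i
  have hcP : ∀ (k : Fin m) (j : Fin m), ContinuousOn (fun u => ((ρ'' u)ᵀ * ρ u) k j) (Icc 0 T) :=
    contOn_mul_entry hcρ''T hcρ
  have hcC : ∀ (k : Fin m) (j : Fin m), ContinuousOn (fun u => ((ρ' u)ᵀ * ρ' u) k j) (Icc 0 T) :=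
    contOn_mul_entry hcρ'T hcρ'
  have hcq : ∀ (i j : Fin n), ContinuousOn (fun u => q u i j) (Icc 0 T) := by
    intro i j
    simp only [hq, Matrix.sub_apply, Matrix.neg_apply]
    exact ((contOn_mul_entry hcg hcρ''T i j).neg).sub (contOn_mul_entry hg'c hcρ'T i j)
  have hcQ : ∀ (i : Fin n) (j : Fin m), ContinuousOn (fun u => (q u * ρ u) i j) (Icc 0 T) :=
    contOn_mul_entry hcq hcρ
  have hInt : ∀ (h : ℝ → ℝ), ContinuousOn h (Icc 0 T) → ∀ x ∈ Icc (0:ℝ) T,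
      IntervalIntegrable h volume 0 x := by
    intro h hc x hx
    apply (hc.mono ?_).intervalIntegrable
    rw [uIcc_of_le hx.1]
    exact Icc_subset_Icc le_rfl hx.2
  -- integration by parts
  have hibp : ∀ (k : Fin m) (j : Fin m), ∀ x ∈ Icc (0:ℝ) T,
      (∫ u in (0:ℝ)..x, ((ρ'' u)ᵀ * ρ u) k j)
        = ((ρ' x)ᵀ * ρ x) k j - ∫ u in (0:ℝ)..x, ((ρ' u)ᵀ * ρ' u) k j := by
    intro k j
    have hz : ∀ x ∈ Icc (0:ℝ) T,
        ((∫ u in (0:ℝ)..x, ((ρ'' u)ᵀ * ρ u) k j)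
          + (∫ u in (0:ℝ)..x, ((ρ' u)ᵀ * ρ' u) k j) - ((ρ' x)ᵀ * ρ x) k j) = 0 := by
      apply zero_of_deriv_zero hT
      · intro x hx
        have h1 := ftc_within _ (hcP k j) x hx
        have h2 := ftc_within _ (hcC k j) x hx
        have h3 : HasDerivWithinAt (fun u => ((ρ' u)ᵀ * ρ u) k j)
            (((ρ'' x)ᵀ * ρ x + (ρ' x)ᵀ * ρ' x) k j) (Icc 0 T) x :=
          hasDeriv_mul_entry (M := fun u => (ρ' u)ᵀ) (Md := fun u => (ρ'' u)ᵀ)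
            (N := ρ) (Nd := ρ')
            (fun a b => hρd' x hx b a) (fun a b => hρd x hx a b) k j
        have htot := (h1.fun_add h2).fun_sub h3
        simpa [Matrix.add_apply] using htot
      · simp [hρ0, Matrix.mul_apply]
    intro x hx
    have := hz x hx
    linarith
  intro t ht
  ext i j
  have key : ∀ x ∈ Icc (0:ℝ) T,
      (ρ x i j - ((∑ k, g x i k * ∫ u in (0:ℝ)..x, ((ρ'' u)ᵀ * ρ u) k j)
        + ∫ u in (0:ℝ)..x, (q u * ρ u) i j) - ∑ k, g x i k * Sig k j) = 0 := by
    apply zero_of_deriv_zero hT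
    · intro x hx
      have d1 := hρd x hx i j
      have dA : ∀ k : Fin m, HasDerivWithinAt
          (fun s => ∫ u in (0:ℝ)..s, ((ρ'' u)ᵀ * ρ u) k j)
          (((ρ'' x)ᵀ * ρ x) k j) (Icc 0 T) x := fun k => ftc_within _ (hcP k j) x hx
      have dB := ftc_within _ (hcQ i j) x hx
      have dsum : HasDerivWithinAt
          (fun s => ∑ k, g s i k * ∫ u in (0:ℝ)..s, ((ρ'' u)ᵀ * ρ u) k j)
          (∑ k, (g' x i k * (∫ u in (0:ℝ)..x, ((ρ'' u)ᵀ * ρ u) k j)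
            + g x i k * ((ρ'' x)ᵀ * ρ x) k j)) (Icc 0 T) x :=
        HasDerivWithinAt.fun_sum fun k _ => (hgd x hx i k).mul (dA k)
      have dSig : HasDerivWithinAt (fun s => ∑ k, g s i k * Sig k j)
          (∑ k, g' x i k * Sig k j) (Icc 0 T) x :=
        HasDerivWithinAt.fun_sum fun k _ => (hgd x hx i k).mul_const _
      have dtot := (d1.sub (dsum.add dB)).sub dSig
      have hgeq' : (∑ k, g' x i k * (Sig k j - ∫ u in (0:ℝ)..x, ((ρ' u)ᵀ * ρ' u) k j))
          = ρ' x i j := by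
        have h := congrFun (congrFun (hgeq x hx) i) j
        rw [Matrix.mul_apply] at h
        simpa [matInt, Matrix.sub_apply] using h
      have hmat : g' x * ((ρ' x)ᵀ * ρ x) + g x * ((ρ'' x)ᵀ * ρ x) + q x * ρ x = 0 := by
        rw [hq, Matrix.sub_mul, Matrix.neg_mul, Matrix.mul_assoc, Matrix.mul_assoc]
        abel
      have hmat' : (∑ k, g' x i k * ((ρ' x)ᵀ * ρ x) k j)
          + (∑ k, g x i k * ((ρ'' x)ᵀ * ρ x) k j) + (q x * ρ x) i j = 0 := by
        have h := congrFun (congrFun hmat i) j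
        simp only [Matrix.add_apply, Matrix.zero_apply] at h
        rw [Matrix.mul_apply, Matrix.mul_apply] at h
        exact h
      have hD : (ρ' x i j - ((∑ k, (g' x i k * (∫ u in (0:ℝ)..x, ((ρ'' u)ᵀ * ρ u) k j)
            + g x i k * ((ρ'' x)ᵀ * ρ x) k j)) + (q x * ρ x) i j)
            - ∑ k, g' x i k * Sig k j) = 0 := by
        have hAk : (∑ k, (g' x i k * (∫ u in (0:ℝ)..x, ((ρ'' u)ᵀ * ρ u) k j)
              + g x i k * ((ρ'' x)ᵀ * ρ x) k j))
            = ((∑ k, g' x i k * ((ρ' x)ᵀ * ρ x) k j)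
              - (∑ k, g' x i k * ∫ u in (0:ℝ)..x, ((ρ' u)ᵀ * ρ' u) k j))
              + ∑ k, g x i k * ((ρ'' x)ᵀ * ρ x) k j := by
          rw [← Finset.sum_sub_distrib, ← Finset.sum_add_distrib]
          refine Finset.sum_congr rfl fun k _ => ?_
          rw [hibp k j x hx]; ring
        have hgeq'' : (∑ k, g' x i k * Sig k j)
              - (∑ k, g' x i k * ∫ u in (0:ℝ)..x, ((ρ' u)ᵀ * ρ' u) k j) = ρ' x i j := by
          rw [← Finset.sum_sub_distrib, ← hgeq']
          exact Finset.sum_congr rfl fun k _ => by ring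
        rw [hAk]
        linarith [hmat', hgeq'']
      rw [hD] at dtot
      exact dtot
    · simp [hρ0, hg0]
  have hmain := key t ht
  have hsplit : matInt (fun u => lam t u * ρ u) 0 t i j
      = (∑ k, g t i k * ∫ u in (0:ℝ)..t, ((ρ'' u)ᵀ * ρ u) k j)
        + ∫ u in (0:ℝ)..t, (q u * ρ u) i j := by
    have h1 : ∀ u, (lam t u * ρ u) i j
        = (∑ k, g t i k * ((ρ'' u)ᵀ * ρ u) k j) + (q u * ρ u) i j := by
      intro u
      rw [hlam, hp, Matrix.add_mul, Matrix.mul_assoc, Matrix.add_apply, Matrix.mul_apply]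
    show (∫ u in (0:ℝ)..t, (lam t u * ρ u) i j) = _
    simp only [h1]
    rw [intervalIntegral.integral_add
        (hInt _ (continuousOn_finset_sum _ fun k _ => (continuousOn_const.fun_mul (hcP k j))) t ht)
        (hInt _ (hcQ i j) t ht),
      intervalIntegral.integral_finset_sum
        (fun k _ => (hInt _ (hcP k j) t ht).const_mul _)]
    simp only [intervalIntegral.integral_const_mul]
  simp only [Matrix.sub_apply, Matrix.zero_apply]
  rw [hsplit, Matrix.mul_apply]
  linarith [hmain]
end
end

section
/- Let a ∈ ℝ^{m×m} and h ∈ ℝ^{n×m} be such that (a, h) is detectable and (a, I_m) is stabilizable, and let γ_∞ be the unique symmetric positive semidefinite solution of γ aᵀ + a γ + I_m − γ hᵀ h γ = 0. Then λ₀ := min{ −Re λ : λ ∈ ℂ is an eigenvalue of a − γ_∞ hᵀ h } is strictly positive; equivalently, every complex eigenvalue of the matrix a − γ_∞ hᵀ h has negative real part. -/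
open Matrix

noncomputable section

/-- Complexification of a real matrix. -/
def cplx {m n : ℕ} (A : Matrix (Fin m) (Fin n) ℝ) : Matrix (Fin m) (Fin n) ℂ :=
  A.map (Complex.ofReal)

/-- The ℝ-linear embedding of `ℝ^m` into `ℂ^m`. -/
def toCVec {m : ℕ} : (Fin m → ℝ) →ₗ[ℝ] (Fin m → ℂ) where
  toFun v := fun i => (v i : ℂ)
  map_add' x y := by funext i; push_cast; simp
  map_smul' c x := by funext i; simp [Complex.real_smul]

/-- The stable subspace of a real square matrix, as a subspace of `ℂ^m`: the sum of the
generalized eigenspaces associated with eigenvalues with negative real part. -/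
def stableC {m : ℕ} (A : Matrix (Fin m) (Fin m) ℝ) : Submodule ℂ (Fin m → ℂ) :=
  ⨆ (μ : ℂ) (_ : μ.re < 0),
    LinearMap.ker (Matrix.toLin' ((cplx A - μ • (1 : Matrix (Fin m) (Fin m) ℂ)) ^ m))

/-- The stable subspace of a real square matrix, as a real subspace of `ℝ^m`. -/
def stableR {m : ℕ} (A : Matrix (Fin m) (Fin m) ℝ) : Submodule ℝ (Fin m → ℝ) :=
  Submodule.comap toCVec ((stableC A).restrictScalars ℝ)

/-- The unstable subspace: the orthogonal complement of the stable subspace in `ℝ^m`. -/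
def unstableR {m : ℕ} (A : Matrix (Fin m) (Fin m) ℝ) : Submodule ℝ (Fin m → ℝ) where
  carrier := {w | ∀ v ∈ stableR A, v ⬝ᵥ w = 0}
  add_mem' := by
    intro a b ha hb v hv
    simp [dotProduct_add, ha v hv, hb v hv]
  zero_mem' := by
    intro v hv
    simp
  smul_mem' := by
    intro c a ha v hv
    simp [dotProduct_smul, ha v hv]

/-- Kernel of the stacked matrix `[D; DA; …; DA^{m−1}]`. -/
def kerStack {m n : ℕ} (A : Matrix (Fin m) (Fin m) ℝ) (D : Matrix (Fin n) (Fin m) ℝ) :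
    Submodule ℝ (Fin m → ℝ) :=
  ⨅ i : Fin m, LinearMap.ker (Matrix.toLin' (D * A ^ (i : ℕ)))

/-- `(A, D)` is detectable if the kernel of `[D; DA; …; DA^{m−1}]` is contained in the
stable subspace of `A`. -/
def Detectable {m n : ℕ} (A : Matrix (Fin m) (Fin m) ℝ) (D : Matrix (Fin n) (Fin m) ℝ) : Prop :=
  kerStack A D ≤ stableR A

/-- Column span of `(B, AB, …, A^{m−1}B)`. -/
def colSpan {m l : ℕ} (A : Matrix (Fin m) (Fin m) ℝ) (B : Matrix (Fin m) (Fin l) ℝ) :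
    Submodule ℝ (Fin m → ℝ) :=
  ⨆ i : Fin m, LinearMap.range (Matrix.toLin' (A ^ (i : ℕ) * B))

/-- `(A, B)` is stabilizable if the unstable subspace of `A` is contained in the column
span of `(B, AB, …, A^{m−1}B)`. -/
def Stabilizable {m l : ℕ} (A : Matrix (Fin m) (Fin m) ℝ) (B : Matrix (Fin m) (Fin l) ℝ) : Prop :=
  unstableR A ≤ colSpan A B



/-! ### Auxiliary lemmas for `stmt12` -/

lemma my_eval_charpoly {k : ℕ} (M : Matrix (Fin k) (Fin k) ℂ) (μ : ℂ) :
    M.charpoly.eval μ = (μ • (1 : Matrix (Fin k) (Fin k) ℂ) - M).det := by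
  rw [Matrix.charpoly, ← Polynomial.coe_evalRingHom, RingHom.map_det]
  congr 1
  ext i j
  by_cases hij : i = j <;>
    simp [Matrix.charmatrix_apply, hij, Matrix.one_apply, Matrix.diagonal_apply]

lemma star_dot_self {k : ℕ} (w : Fin k → ℂ) :
    star w ⬝ᵥ w = ((∑ i, Complex.normSq (w i) : ℝ) : ℂ) := by
  simp only [dotProduct, Pi.star_apply, Complex.star_def, Complex.ofReal_sum]
  exact Finset.sum_congr rfl fun i _ => (Complex.normSq_eq_conj_mul_self).symm

lemma cplx_conjTranspose {p q : ℕ} (M : Matrix (Fin p) (Fin q) ℝ) :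
    (cplx M)ᴴ = cplx Mᵀ := by
  ext i j; simp [cplx, Matrix.conjTranspose_apply, Complex.conj_ofReal]

lemma star_mulVec_cplx {p q : ℕ} (M : Matrix (Fin p) (Fin q) ℝ) (v : Fin q → ℂ) :
    star ((cplx M) *ᵥ v) = (cplx M) *ᵥ (star v) := by
  rw [Matrix.star_mulVec, cplx_conjTranspose]
  exact Matrix.vecMul_transpose (cplx M) (star v)

lemma cplx_mul {p q r : ℕ} (M : Matrix (Fin p) (Fin q) ℝ) (N : Matrix (Fin q) (Fin r) ℝ) :
    cplx (M * N) = cplx M * cplx N :=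
  Matrix.map_mul (f := Complex.ofRealHom)

lemma cplx_add {p q : ℕ} (M N : Matrix (Fin p) (Fin q) ℝ) :
    cplx (M + N) = cplx M + cplx N := by ext i j; simp [cplx]

lemma cplx_neg {p q : ℕ} (M : Matrix (Fin p) (Fin q) ℝ) :
    cplx (-M) = -cplx M := by ext i j; simp [cplx]

lemma cplx_one {p : ℕ} : cplx (1 : Matrix (Fin p) (Fin p) ℝ) = 1 :=
  Matrix.map_one _ Complex.ofReal_zero Complex.ofReal_one

/-- If `(a, h)` is detectable, `(a, I_m)` is stabilizable, and `γ` is the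
unique symmetric positive semidefinite solution of the algebraic Riccati equation
`γ aᵀ + a γ + I − γ hᵀ h γ = 0`, then every complex eigenvalue of `a − γ hᵀ h` (i.e. every
complex root of its characteristic polynomial) has strictly negative real part; equivalently
`λ₀ = min{−Re λ : λ eigenvalue of a − γ hᵀ h}` is strictly positive. -/
theorem stmt12 {m n : ℕ} (hm : 0 < m) (hn : 0 < n)
    (a : Matrix (Fin m) (Fin m) ℝ) (h : Matrix (Fin n) (Fin m) ℝ)
    (hdet : Detectable a h) (hstab : Stabilizable a (1 : Matrix (Fin m) (Fin m) ℝ))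
    (γ : Matrix (Fin m) (Fin m) ℝ) (hγ : γ.PosSemidef)
    (hric : γ * aᵀ + a * γ + 1 - γ * hᵀ * h * γ = 0)
    (huniq : ∀ γ' : Matrix (Fin m) (Fin m) ℝ,
      γ'.PosSemidef → γ' * aᵀ + a * γ' + 1 - γ' * hᵀ * h * γ' = 0 → γ' = γ) :
    ∀ μ : ℂ, (cplx (a - γ * hᵀ * h)).charpoly.IsRoot μ → μ.re < 0 := by
  intro μ hroot
  -- notation
  set A : Matrix (Fin m) (Fin m) ℝ := a - γ * hᵀ * h with hA
  have hγs : γᵀ = γ := by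
    have h1 : γᴴ = γ := hγ.1
    rwa [Matrix.conjTranspose_eq_transpose_of_trivial] at h1
  -- Lyapunov identity over ℝ
  have key : A * γ + γ * Aᵀ = -(1 + γ * hᵀ * h * γ) := by
    have h2 : γ * aᵀ + a * γ = γ * hᵀ * h * γ - 1 := eq_sub_of_add_eq (sub_eq_zero.mp hric)
    have h3 : A * γ + γ * Aᵀ
        = (γ * aᵀ + a * γ) - (γ * hᵀ * h * γ + γ * hᵀ * h * γ) := by
      rw [hA, Matrix.transpose_sub, Matrix.transpose_mul, Matrix.transpose_mul,
        Matrix.transpose_transpose, hγs, Matrix.sub_mul, Matrix.mul_sub]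
      have h4 : γ * (hᵀ * (h * γ)) = γ * hᵀ * h * γ := by simp [Matrix.mul_assoc]
      rw [h4]; abel
    rw [h3, h2]; abel
  -- complexify
  set M : Matrix (Fin m) (Fin m) ℂ := cplx A with hM
  set G : Matrix (Fin m) (Fin m) ℂ := cplx γ with hG
  have keyC : M * G + G * Mᵀ = -(1 + G * cplx hᵀ * cplx h * G) := by
    have := congrArg cplx key
    rw [cplx_add, cplx_mul, cplx_neg, cplx_add, cplx_one, cplx_mul, cplx_mul, cplx_mul,
      cplx_mul] at this
    exact this
  -- eigenvector of Mᵀ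
  have hdet0 : (μ • (1 : Matrix (Fin m) (Fin m) ℂ) - M).det = 0 := by
    rw [← my_eval_charpoly]; exact hroot
  have hdetT : (μ • (1 : Matrix (Fin m) (Fin m) ℂ) - Mᵀ).det = 0 := by
    rw [← Matrix.det_transpose, Matrix.transpose_sub, Matrix.transpose_smul,
      Matrix.transpose_one, Matrix.transpose_transpose]
    exact hdet0
  obtain ⟨v, hv0, hv⟩ := Matrix.exists_mulVec_eq_zero_iff.mpr hdetT
  have heig : Mᵀ *ᵥ v = μ • v := by
    have := hv
    rw [Matrix.sub_mulVec, sub_eq_zero, Matrix.smul_mulVec, Matrix.one_mulVec] at this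
    exact this.symm
  -- scalar quantities
  set s : ℂ := star v ⬝ᵥ (G *ᵥ v) with hs
  -- LHS terms
  have hstarMT : Mᵀ *ᵥ star v = star (Mᵀ *ᵥ v) := by
    have : Mᵀ = cplx Aᵀ := rfl
    rw [this, (star_mulVec_cplx Aᵀ v).symm]
  have l1 : star v ⬝ᵥ ((M * G) *ᵥ v) = (starRingEnd ℂ) μ * s := by
    rw [← Matrix.mulVec_mulVec, Matrix.dotProduct_mulVec]
    have e1 : star v ᵥ* M = Mᵀ *ᵥ star v := (Matrix.mulVec_transpose M (star v)).symm
    rw [e1, hstarMT, heig, star_smul, smul_dotProduct]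
    simp [hs, Complex.star_def, smul_eq_mul]
  have l2 : star v ⬝ᵥ ((G * Mᵀ) *ᵥ v) = μ * s := by
    rw [← Matrix.mulVec_mulVec, heig, Matrix.mulVec_smul, dotProduct_smul]
    simp [hs, smul_eq_mul]
  -- RHS quadratic term
  set B : Matrix (Fin n) (Fin m) ℂ := cplx h * G with hB
  set w : Fin n → ℂ := B *ᵥ v with hw
  have hBH : Bᴴ = G * cplx hᵀ := by
    rw [hB, Matrix.conjTranspose_mul, hG, cplx_conjTranspose, cplx_conjTranspose, hγs]
  have r1 : star v ⬝ᵥ ((G * cplx hᵀ * cplx h * G) *ᵥ v) = star w ⬝ᵥ w := by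
    have e2 : G * cplx hᵀ * cplx h * G = Bᴴ * B := by
      rw [hBH, hB]; simp [Matrix.mul_assoc]
    rw [e2, ← Matrix.mulVec_mulVec, Matrix.dotProduct_mulVec, ← Matrix.star_mulVec, ← hw]
  -- reality and nonnegativity of s via the PSD square root
  obtain ⟨u, hu⟩ : ∃ u : Fin m → ℂ, s = star u ⬝ᵥ u := by
    obtain ⟨b, hbb, hbs⟩ : ∃ b : Matrix (Fin m) (Fin m) ℝ, b * b = γ ∧ bᵀ = b := by
      open scoped MatrixOrder in
      refine ⟨CFC.sqrt γ, CFC.sqrt_mul_sqrt_self γ hγ.nonneg, ?_⟩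
      open scoped MatrixOrder in
      have h1 : (CFC.sqrt γ)ᴴ = CFC.sqrt γ := (CFC.sqrt_nonneg γ).posSemidef.1
      rwa [Matrix.conjTranspose_eq_transpose_of_trivial] at h1
    refine ⟨cplx b *ᵥ v, ?_⟩
    have e3 : G = cplx b * cplx b := by rw [hG, ← hbb, cplx_mul]
    rw [hs, e3, ← Matrix.mulVec_mulVec, Matrix.dotProduct_mulVec]
    congr 1
    rw [Matrix.star_mulVec, cplx_conjTranspose, hbs]
  -- assemble the scalar identity
  have main : (starRingEnd ℂ) μ * s + μ * s = -(star v ⬝ᵥ v) - star w ⬝ᵥ w := by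
    have := congrArg (fun X : Matrix (Fin m) (Fin m) ℂ => star v ⬝ᵥ (X *ᵥ v)) keyC
    simp only [Matrix.add_mulVec, dotProduct_add, Matrix.neg_mulVec,
      dotProduct_neg, Matrix.one_mulVec] at this
    rw [l1, l2, r1] at this
    rw [this]; ring
  -- pass to real numbers
  set S : ℝ := ∑ i, Complex.normSq (u i) with hS
  set V : ℝ := ∑ i, Complex.normSq (v i) with hV
  set W : ℝ := ∑ i, Complex.normSq (w i) with hW
  have hsS : s = (S : ℂ) := by rw [hu, star_dot_self]
  have hreal : ((2 * μ.re * S : ℝ) : ℂ) = ((-(V + W) : ℝ) : ℂ) := by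
    have e4 : (starRingEnd ℂ) μ * s + μ * s = ((starRingEnd ℂ) μ + μ) * s := by ring
    have e5 : (starRingEnd ℂ) μ + μ = ((2 * μ.re : ℝ) : ℂ) := by
      rw [add_comm]
      simpa [two_mul] using Complex.add_conj μ
    rw [e4, e5, hsS, star_dot_self v, star_dot_self w, ← hV, ← hW] at main
    push_cast at main ⊢
    rw [main]; ring
  have hreal' : 2 * μ.re * S = -(V + W) := by exact_mod_cast hreal
  have hSnn : 0 ≤ S := Finset.sum_nonneg fun i _ => Complex.normSq_nonneg _
  have hWnn : 0 ≤ W := Finset.sum_nonneg fun i _ => Complex.normSq_nonneg _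
  have hVpos : 0 < V := by
    obtain ⟨i, hi⟩ := Function.ne_iff.mp hv0
    exact Finset.sum_pos' (fun j _ => Complex.normSq_nonneg _)
      ⟨i, Finset.mem_univ i, Complex.normSq_pos.mpr hi⟩
  nlinarith [hreal', hSnn, hWnn, hVpos]
end
end
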